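/- With f_{σ,ω} = Σ_{ω'⊆ω∖σ} (−2)^{|ω'|} u_σ t_{ω'} ∈ R_K and the differential d on R_K (d t_i = u_i, d u_i = 0, Leibniz), the map φ_ω: C̃*(K_ω) → R(K,Λ) defined by σ* ↦ (−1)^{|σ|} f_{σ,ω} is a chain map when C̃*(K_ω) is given the doubled coboundary 2δ; that is, φ_ω(2δ(σ*)) = d(φ_ω(σ*)) for every face σ ∈ K_ω. -/

import Mathlib

open Finset
open scoped Classical

noncomputable section

abbrev FA (m : ℕ) := FreeAlgebra ℤ (Fin m ⊕ Fin m)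

def uf (m : ℕ) (i : Fin m) : FA m := FreeAlgebra.ι ℤ (Sum.inl i)
def tf (m : ℕ) (i : Fin m) : FA m := FreeAlgebra.ι ℤ (Sum.inr i)

def ufProd (m : ℕ) (σ : Finset (Fin m)) : FA m :=
  ((σ.sort (· ≤ ·)).map (uf m)).prod

/-- The defining relations of the DGA `R_K`. -/
inductive RKRel (m : ℕ) (K : Finset (Fin m) → Prop) : FA m → FA m → Prop
  | ut_same (i : Fin m) : RKRel m K (uf m i * tf m i) (uf m i)
  | tu_same (i : Fin m) : RKRel m K (tf m i * uf m i) 0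
  | ut_comm {i j : Fin m} (h : i ≠ j) : RKRel m K (uf m i * tf m j) (tf m j * uf m i)
  | tt_same (i : Fin m) : RKRel m K (tf m i * tf m i) (tf m i)
  | uu_same (i : Fin m) : RKRel m K (uf m i * uf m i) 0
  | uu_anti {i j : Fin m} (h : i ≠ j) : RKRel m K (uf m i * uf m j) (-(uf m j * uf m i))
  | tt_comm (i j : Fin m) : RKRel m K (tf m i * tf m j) (tf m j * tf m i)
  | notface (σ : Finset (Fin m)) (h : ¬ K σ) : RKRel m K (ufProd m σ) 0

abbrev RK (m : ℕ) (K : Finset (Fin m) → Prop) := RingQuot (RKRel m K)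

def uqK (m : ℕ) (K : Finset (Fin m) → Prop) (i : Fin m) : RK m K :=
  RingQuot.mkRingHom (RKRel m K) (uf m i)
def tqK (m : ℕ) (K : Finset (Fin m) → Prop) (i : Fin m) : RK m K :=
  RingQuot.mkRingHom (RKRel m K) (tf m i)

def uProdK (m : ℕ) (K : Finset (Fin m) → Prop) (σ : Finset (Fin m)) : RK m K :=
  ((σ.sort (· ≤ ·)).map (uqK m K)).prod
def tProdK (m : ℕ) (K : Finset (Fin m) → Prop) (τ : Finset (Fin m)) : RK m K :=
  ((τ.sort (· ≤ ·)).map (tqK m K)).prod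

/-- `f_{σ,ω} = Σ_{ω' ⊆ ω∖σ} (−2)^{|ω'|} u_σ t_{ω'} ∈ R_K`. -/
def fEl (m : ℕ) (K : Finset (Fin m) → Prop) (σ ω : Finset (Fin m)) : RK m K :=
  ∑ ω' ∈ (ω \ σ).powerset, (-2 : ℤ) ^ ω'.card • (uProdK m K σ * tProdK m K ω')

/-- The span of the monomials `u_σ t_τ` with `|σ| = k`: the degree-`k` part of `R_K`. -/
def degreePart (m : ℕ) (K : Finset (Fin m) → Prop) (k : ℕ) : Submodule ℤ (RK m K) :=
  Submodule.span ℤ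
    {z | ∃ σ τ : Finset (Fin m), σ.card = k ∧ z = uProdK m K σ * tProdK m K τ}

namespace PhiOmegaAux

variable (m : ℕ) (K : Finset (Fin m) → Prop)

def uL (l : List (Fin m)) : RK m K := (l.map (uqK m K)).prod
def tL (l : List (Fin m)) : RK m K := (l.map (tqK m K)).prod

lemma uL_nil : uL m K [] = 1 := rfl
lemma tL_nil : tL m K [] = 1 := rfl
lemma uL_cons (x : Fin m) (l : List (Fin m)) :
    uL m K (x :: l) = uqK m K x * uL m K l := by simp [uL]
lemma tL_cons (x : Fin m) (l : List (Fin m)) :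
    tL m K (x :: l) = tqK m K x * tL m K l := by simp [tL]

lemma uProdK_eq (σ : Finset (Fin m)) : uProdK m K σ = uL m K (σ.sort (· ≤ ·)) := rfl
lemma tProdK_eq (τ : Finset (Fin m)) : tProdK m K τ = tL m K (τ.sort (· ≤ ·)) := rfl

lemma rel_eq {x y : FA m} (h : RKRel m K x y) :
    RingQuot.mkRingHom (RKRel m K) x = RingQuot.mkRingHom (RKRel m K) y :=
  RingQuot.mkRingHom_rel h

lemma ut_comm {i j : Fin m} (h : i ≠ j) :
    uqK m K i * tqK m K j = tqK m K j * uqK m K i := by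
  have := rel_eq m K (RKRel.ut_comm (K := K) h)
  simp only [map_mul] at this
  exact this

lemma tt_comm (i j : Fin m) :
    tqK m K i * tqK m K j = tqK m K j * tqK m K i := by
  have := rel_eq m K (RKRel.tt_comm (K := K) i j)
  simp only [map_mul] at this
  exact this

lemma uu_anti {i j : Fin m} (h : i ≠ j) :
    uqK m K i * uqK m K j = -(uqK m K j * uqK m K i) := by
  have := rel_eq m K (RKRel.uu_anti (K := K) h)
  simp only [map_mul, map_neg] at this
  exact this

lemma mk_ufProd (σ : Finset (Fin m)) :
    RingQuot.mkRingHom (RKRel m K) (ufProd m σ) = uProdK m K σ := by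
  unfold ufProd uProdK
  rw [map_list_prod, List.map_map]
  rfl

lemma uProd_zero {σ : Finset (Fin m)} (h : ¬ K σ) : uProdK m K σ = 0 := by
  rw [← mk_ufProd]
  have := rel_eq m K (RKRel.notface (K := K) σ h)
  simpa using this

lemma pairwise_total {α : Type*} (R : α → α → Prop) (h : ∀ a b, R a b) :
    ∀ l : List α, l.Pairwise R
  | [] => List.Pairwise.nil
  | a :: l => List.Pairwise.cons (fun b _ => h a b) (pairwise_total R h l)

lemma tL_perm {l₁ l₂ : List (Fin m)} (h : l₁.Perm l₂) : tL m K l₁ = tL m K l₂ := by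
  apply List.Perm.prod_eq' (h.map _)
  rw [List.pairwise_map]
  refine pairwise_total _ (fun a b => ?_) l₁
  exact tt_comm m K a b

lemma uL_mul_u {v : Fin m} {l : List (Fin m)} (h : ∀ x ∈ l, x ≠ v) :
    uL m K l * uqK m K v = ((-1 : ℤ) ^ l.length) • (uqK m K v * uL m K l) := by
  induction l with
  | nil => simp [uL_nil]
  | cons x xs ih =>
    have hx : x ≠ v := h x (by simp)
    have ih' := ih (fun y hy => h y (List.mem_cons_of_mem _ hy))
    rw [uL_cons, mul_assoc, ih', mul_smul_comm]
    have hadd : uqK m K x * uqK m K v + uqK m K v * uqK m K x = 0 := by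
      rw [uu_anti m K hx, neg_add_cancel]
    have hsw : uqK m K x * (uqK m K v * uL m K xs)
        = -(uqK m K v * (uqK m K x * uL m K xs)) := by
      apply eq_neg_of_add_eq_zero_left
      rw [← mul_assoc, ← mul_assoc, ← add_mul, hadd, zero_mul]
    rw [hsw, List.length_cons, pow_succ, mul_smul, neg_one_zsmul]

lemma uL_orderedInsert {v : Fin m} :
    ∀ {l : List (Fin m)}, l.Pairwise (· ≤ ·) → (∀ x ∈ l, x ≠ v) →
      uL m K l * uqK m K v
        = ((-1 : ℤ) ^ (l.filter (fun x => v < x)).length) •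
            uL m K (List.orderedInsert (· ≤ ·) v l)
  | [], _, _ => by simp [uL_nil, uL_cons]
  | x :: xs, hs, h => by
    have hx : x ≠ v := h x (by simp)
    by_cases hvx : v ≤ x
    · have hall : ∀ y ∈ x :: xs, v < y := by
        intro y hy
        rcases List.mem_cons.mp hy with rfl | hy'
        · exact lt_of_le_of_ne hvx (Ne.symm hx)
        · exact lt_of_le_of_ne (le_trans hvx ((List.pairwise_cons.mp hs).1 y hy'))
            (Ne.symm (h y hy))
      have hfilter : (x :: xs).filter (fun y => v < y) = x :: xs :=
        List.filter_eq_self.mpr (fun y hy => by simpa using hall y hy)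
      rw [List.orderedInsert_cons_of_le _ xs hvx, hfilter, uL_mul_u m K h, uL_cons m K v]
    · have hs' : xs.Pairwise (· ≤ ·) := (List.pairwise_cons.mp hs).2
      have ih := uL_orderedInsert hs' (fun y hy => h y (List.mem_cons_of_mem _ hy))
      have hnlt : ¬ v < x := fun hc => hvx (le_of_lt hc)
      have hins : List.orderedInsert (· ≤ ·) v (x :: xs)
          = x :: List.orderedInsert (· ≤ ·) v xs := by
        simp [List.orderedInsert, hvx]
      have hfil : (x :: xs).filter (fun y => v < y) = xs.filter (fun y => v < y) := by
        simp [List.filter_cons, hnlt]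
      rw [hins, hfil, uL_cons, mul_assoc, ih, mul_smul_comm, uL_cons]

lemma sort_insert {σ : Finset (Fin m)} {v : Fin m} (h : v ∉ σ) :
    (insert v σ).sort (· ≤ ·) = List.orderedInsert (· ≤ ·) v (σ.sort (· ≤ ·)) := by
  refine List.Perm.eq_of_pairwise' (Finset.pairwise_sort _ _)
    (List.Pairwise.orderedInsert _ _ (Finset.pairwise_sort _ _)) ?_
  · have h1 : List.Perm (List.orderedInsert (· ≤ ·) v (σ.sort (· ≤ ·))) (v :: σ.sort (· ≤ ·)) :=
      List.perm_orderedInsert _ _ _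
    refine List.Perm.trans ?_ h1.symm
    rw [← Multiset.coe_eq_coe, Finset.sort_eq, ← Multiset.cons_coe, Finset.sort_eq,
      Finset.insert_val_of_notMem h]

lemma filter_length_eq (σ : Finset (Fin m)) (p : Fin m → Prop) [DecidablePred p] :
    ((σ.sort (· ≤ ·)).filter (fun x => p x)).length = (σ.filter p).card := by
  rw [Finset.card, Finset.filter_val]
  rw [← Finset.sort_eq (s := σ) (r := (· ≤ ·)), Multiset.filter_coe]
  simp

lemma uProd_mul_u {σ : Finset (Fin m)} {v : Fin m} (h : v ∉ σ) :
    uProdK m K σ * uqK m K v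
      = ((-1 : ℤ) ^ (σ.filter (fun x => v < x)).card) • uProdK m K (insert v σ) := by
  rw [uProdK_eq, uProdK_eq, sort_insert m h,
    ← filter_length_eq m σ (fun x => v < x)]
  exact uL_orderedInsert m K (Finset.pairwise_sort _ _)
    (fun x hx => fun hc => h (by rw [← hc]; exact (Finset.mem_sort _).mp hx))

lemma one_mem : (1 : RK m K) ∈ degreePart m K 0 := by
  apply Submodule.subset_span
  exact ⟨∅, ∅, by simp, by simp [uProdK, tProdK, Finset.sort_empty]⟩

lemma u_mem (i : Fin m) : uqK m K i ∈ degreePart m K 1 := by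
  apply Submodule.subset_span
  refine ⟨{i}, ∅, by simp, ?_⟩
  simp [uProdK, tProdK, Finset.sort_singleton, Finset.sort_empty]

lemma t_mem (i : Fin m) : tqK m K i ∈ degreePart m K 0 := by
  apply Submodule.subset_span
  refine ⟨∅, {i}, by simp, ?_⟩
  simp [uProdK, tProdK, Finset.sort_singleton, Finset.sort_empty]

lemma uProd_mem (σ : Finset (Fin m)) : uProdK m K σ ∈ degreePart m K σ.card := by
  apply Submodule.subset_span
  exact ⟨σ, ∅, rfl, by simp [tProdK, Finset.sort_empty]⟩

section D

variable {m K}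
variable (d : RK m K →+ RK m K)
variable (hd_t : ∀ i, d (tqK m K i) = uqK m K i)
variable (hd_u : ∀ i, d (uqK m K i) = 0)
variable (hd_leibniz : ∀ (k : ℕ) (x y : RK m K), x ∈ degreePart m K k →
      d (x * y) = d x * y + (-1 : ℤ) ^ k • (x * d y))

include hd_leibniz

lemma d_one : d 1 = 0 := by
  have h := hd_leibniz 0 1 1 (one_mem m K)
  simp only [mul_one, one_mul, pow_zero, one_smul] at h
  exact (left_eq_add.mp h)

include hd_u in
lemma d_uL : ∀ l : List (Fin m), d (uL m K l) = 0
  | [] => by rw [uL_nil]; exact d_one d hd_leibniz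
  | x :: xs => by
    rw [uL_cons, hd_leibniz 1 _ _ (u_mem m K x), hd_u, zero_mul,
      d_uL xs]
    simp

include hd_u in
lemma d_uProd (σ : Finset (Fin m)) : d (uProdK m K σ) = 0 := by
  rw [uProdK_eq]; exact d_uL d hd_u hd_leibniz _

include hd_t in
lemma d_tL : ∀ l : List (Fin m), l.Nodup →
    d (tL m K l) = (l.map (fun v => uqK m K v * tL m K (l.erase v))).sum
  | [], _ => by rw [tL_nil]; simp [d_one d hd_leibniz]
  | x :: xs, hnd => by
    have hx : x ∉ xs := (List.nodup_cons.mp hnd).1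
    have ih := d_tL xs (List.nodup_cons.mp hnd).2
    rw [tL_cons, hd_leibniz 0 _ _ (t_mem m K x), hd_t, pow_zero, one_smul, ih]
    rw [List.map_cons, List.sum_cons, List.erase_cons_head]
    congr 1
    rw [← List.sum_map_mul_left]
    refine congrArg List.sum (List.map_congr_left fun w hw => ?_)
    have hwx : w ≠ x := fun hc => hx (hc ▸ hw)
    have herase : (x :: xs).erase w = x :: xs.erase w := by
      rw [List.erase_cons]
      simp [Ne.symm hwx]
    rw [herase, tL_cons, ← mul_assoc, ← ut_comm m K hwx, mul_assoc]

include hd_t in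
lemma d_tProd (τ : Finset (Fin m)) :
    d (tProdK m K τ) = ∑ v ∈ τ, uqK m K v * tProdK m K (τ.erase v) := by
  rw [tProdK_eq, d_tL d hd_t hd_leibniz _ (Finset.sort_nodup _ _)]
  have hpt : ∀ v : Fin m, tL m K ((τ.sort (· ≤ ·)).erase v) = tProdK m K (τ.erase v) := by
    intro v
    rw [tProdK_eq]
    apply tL_perm
    rw [← Multiset.coe_eq_coe, ← Multiset.coe_erase, Finset.sort_eq, Finset.sort_eq,
      Finset.erase_val]
  have : ∑ v ∈ τ, uqK m K v * tProdK m K (τ.erase v)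
      = ((τ.sort (· ≤ ·)).map (fun v => uqK m K v * tProdK m K (τ.erase v))).sum := by
    rw [Finset.sum, ← Finset.sort_eq (s := τ) (r := (· ≤ ·)), Multiset.map_coe, Multiset.sum_coe]
  rw [this]
  refine congrArg List.sum (List.map_congr_left fun v _ => ?_)
  rw [hpt v]

end D

lemma powerset_sum_swap {α : Type*} [DecidableEq α] {M : Type*} [AddCommMonoid M]
    (S : Finset α) (F : Finset α → α → M) :
    ∑ ω' ∈ S.powerset, ∑ v ∈ ω', F ω' v
      = ∑ v ∈ S, ∑ ω'' ∈ (S.erase v).powerset, F (insert v ω'') v := by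
  have h1 : ∀ ω' ∈ S.powerset, ∑ v ∈ ω', F ω' v
      = ∑ v ∈ S, if v ∈ ω' then F ω' v else 0 := by
    intro ω' h
    rw [Finset.sum_ite_mem, Finset.inter_eq_right.mpr (Finset.mem_powerset.mp h)]
  rw [Finset.sum_congr rfl h1, Finset.sum_comm]
  refine Finset.sum_congr rfl fun v hv => ?_
  have hv' : v ∉ S.erase v := Finset.notMem_erase v S
  have h2 := Finset.sum_powerset_insert hv' (fun ω' => if v ∈ ω' then F ω' v else 0)
  rw [Finset.insert_erase hv] at h2
  rw [h2]
  have hz : (∑ ω'' ∈ (S.erase v).powerset, if v ∈ ω'' then F ω'' v else 0) = 0 := by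
    refine Finset.sum_eq_zero fun ω'' h => if_neg fun hvm => ?_
    exact Finset.notMem_erase v S (Finset.mem_powerset.mp h hvm)
  rw [hz, zero_add]
  exact Finset.sum_congr rfl fun ω'' h => if_pos (Finset.mem_insert_self v ω'')

lemma coef_arith (a b k : ℕ) :
    (-1 : ℤ) ^ (a + b) * ((-2 : ℤ) ^ (k + 1) * ((-1 : ℤ) ^ (a + b) * (-1 : ℤ) ^ b))
      = (2 * (-1 : ℤ) ^ a * (-1 : ℤ) ^ (a + b + 1)) * (-2 : ℤ) ^ k := by
  have hY : (-1 : ℤ) ^ b * (-1 : ℤ) ^ b = 1 := by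
    rw [← pow_add]; exact Even.neg_one_pow ⟨b, rfl⟩
  linear_combination (-2 * (-2 : ℤ) ^ k * (-1 : ℤ) ^ a * (-1 : ℤ) ^ a * (-1 : ℤ) ^ b) * hY

end PhiOmegaAux

open PhiOmegaAux

/-- Lemma 3.3, second part: the map
`φ_ω : C̃*(K_ω) → R(K,Λ)`, `σ* ↦ (−1)^{|σ|} f_{σ,ω}` is a chain map with respect to the
doubled simplicial coboundary `2δ` on the source and the differential `d` of `R_K`
(`d t_i = u_i`, `d u_i = 0`, extended by the graded Leibniz rule) on the target:
`d((−1)^{|σ|} f_{σ,ω}) = φ_ω(2 δ σ*)` for every face `σ ∈ K_ω`. -/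
theorem phi_omega_chain_map (m : ℕ)
    (K : Finset (Fin m) → Prop)
    (hK : ∀ σ τ, K σ → τ ⊆ σ → K τ)
    (d : RK m K →+ RK m K)
    (hd_t : ∀ i, d (tqK m K i) = uqK m K i)
    (hd_u : ∀ i, d (uqK m K i) = 0)
    (hd_leibniz : ∀ (k : ℕ) (x y : RK m K), x ∈ degreePart m K k →
      d (x * y) = d x * y + (-1 : ℤ) ^ k • (x * d y))
    (ω : Finset (Fin m)) (σ : Finset (Fin m)) (hσ : K σ) (hσω : σ ⊆ ω) :
    d ((-1 : ℤ) ^ σ.card • fEl m K σ ω) =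
      ∑ v ∈ ω \ σ,
        (if K (insert v σ) then
          (2 * (-1 : ℤ) ^ ((σ.filter (· < v)).card) * (-1 : ℤ) ^ (σ.card + 1)) •
            fEl m K (insert v σ) ω
        else 0) := by
  classical
  set S := ω \ σ with hS
  -- d of a single monomial
  have hmono : ∀ ω' ∈ S.powerset,
      d ((-2 : ℤ) ^ ω'.card • (uProdK m K σ * tProdK m K ω'))
        = ∑ v ∈ ω',
            ((-2 : ℤ) ^ ω'.card * ((-1 : ℤ) ^ σ.card *
              (-1 : ℤ) ^ ((σ.filter (fun x => v < x)).card)))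
              • (uProdK m K (insert v σ) * tProdK m K (ω'.erase v)) := by
    intro ω' hω'
    have hsub : ω' ⊆ S := Finset.mem_powerset.mp hω'
    rw [map_zsmul, hd_leibniz σ.card _ _ (uProd_mem m K σ),
      d_uProd d hd_u hd_leibniz, zero_mul, zero_add,
      d_tProd d hd_t hd_leibniz, Finset.mul_sum, @Finset.smul_sum _ _ _ _ (AddCommGroup.toIntModule (RK m K)).toDistribMulAction.toDistribSMul, @Finset.smul_sum _ _ _ _ (AddCommGroup.toIntModule (RK m K)).toDistribMulAction.toDistribSMul]
    refine Finset.sum_congr rfl fun v hv => ?_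
    have hvσ : v ∉ σ := (Finset.mem_sdiff.mp (hsub hv)).2
    rw [← mul_assoc, uProd_mul_u m K hvσ, smul_mul_assoc, smul_smul, smul_smul,
      mul_assoc]
  -- expand d fEl
  have step1 : d ((-1 : ℤ) ^ σ.card • fEl m K σ ω)
      = ∑ ω' ∈ S.powerset, ∑ v ∈ ω',
          ((-1 : ℤ) ^ σ.card * ((-2 : ℤ) ^ ω'.card * ((-1 : ℤ) ^ σ.card *
            (-1 : ℤ) ^ ((σ.filter (fun x => v < x)).card))))
            • (uProdK m K (insert v σ) * tProdK m K (ω'.erase v)) := by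
    rw [map_zsmul]
    unfold fEl
    rw [map_sum, @Finset.smul_sum _ _ _ _ (AddCommGroup.toIntModule (RK m K)).toDistribMulAction.toDistribSMul]
    refine Finset.sum_congr rfl fun ω' hω' => ?_
    rw [hmono ω' hω', @Finset.smul_sum _ _ _ _ (AddCommGroup.toIntModule (RK m K)).toDistribMulAction.toDistribSMul]
    refine Finset.sum_congr rfl fun v hv => ?_
    rw [smul_smul]
  rw [step1, powerset_sum_swap]
  refine Finset.sum_congr rfl fun v hv => ?_
  have hvσ : v ∉ σ := (Finset.mem_sdiff.mp hv).2
  have hvS : v ∉ S.erase v := Finset.notMem_erase v S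
  have hSe : S.erase v = ω \ insert v σ := by
    rw [hS, Finset.sdiff_insert]
  -- abbreviations
  set a := (σ.filter (· < v)).card with ha
  set b := (σ.filter (fun x => v < x)).card with hb
  have hab : a + b = σ.card := by
    rw [ha, hb]
    have : σ.filter (fun x => v < x) = σ.filter (fun x => ¬ x < v) := by
      apply Finset.filter_congr
      intro x hx
      have hxv : x ≠ v := fun hc => hvσ (hc ▸ hx)
      constructor
      · intro h; exact not_lt_of_gt h
      · intro h
        simpa using lt_of_le_of_ne (not_lt.mp h) (Ne.symm hxv)
    rw [this]
    exact Finset.card_filter_add_card_filter_not _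
  by_cases hKv : K (insert v σ)
  · rw [if_pos hKv]
    unfold fEl
    rw [← hSe, @Finset.smul_sum _ _ _ _ (AddCommGroup.toIntModule (RK m K)).toDistribMulAction.toDistribSMul]
    refine Finset.sum_congr rfl fun ω'' hω'' => ?_
    have hvω : v ∉ ω'' := fun hc => hvS (Finset.mem_powerset.mp hω'' hc)
    rw [Finset.erase_insert hvω, Finset.card_insert_of_notMem hvω, smul_smul]
    congr 1
    rw [← hab]
    exact coef_arith a b ω''.card
  · rw [if_neg hKv]
    refine Finset.sum_eq_zero fun ω'' hω'' => ?_
    rw [uProd_zero m K hKv, zero_mul, zsmul_zero]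

end
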